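/- Let n be a positive integer. Let A_n be the n×n tridiagonal matrix with [A_n]_{k,k} = −k², [A_n]_{k,k−1} = k(k+n)/2, [A_n]_{k,k+1} = k(k−n)/2, and let T_n be the n×n matrix with [T_n]_{a,b} = C(a,b)(−1)^b. Then T_n A_n T_n is upper bidiagonal with [T_n A_n T_n]_{k,k} = k(k−1)/2 − kn and [T_n A_n T_n]_{k,k+1} = k(n−k)/2. -/

import Mathlib

open Finset Matrix

/-- The tridiagonal matrix `A_n` with `[A_n]_{k,k} = -k²`, `[A_n]_{k,k-1} = k(k+n)/2`,
`[A_n]_{k,k+1} = k(k-n)/2`, indices `1,…,n` realized on `Fin n` via `i ↦ i+1`. -/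
noncomputable def Amat (n : ℕ) : Matrix (Fin n) (Fin n) ℝ :=
  fun i j =>
    if (i : ℕ) = (j : ℕ) then -(((i : ℕ) + 1 : ℝ) ^ 2)
    else if (i : ℕ) = (j : ℕ) + 1 then (((i : ℕ) + 1 : ℝ) * (((i : ℕ) + 1) + n)) / 2
    else if (j : ℕ) = (i : ℕ) + 1 then (((i : ℕ) + 1 : ℝ) * (((i : ℕ) + 1 : ℝ) - n)) / 2
    else 0

/-- The matrix `T_n` with entries `[T_n]_{a,b} = C(a,b) (-1)^b`, indices `1,…,n`. -/
noncomputable def Tmat (n : ℕ) : Matrix (Fin n) (Fin n) ℝ :=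
  fun a b => ((-1 : ℝ)) ^ ((b : ℕ) + 1) * (((a : ℕ) + 1).choose ((b : ℕ) + 1))

noncomputable def Bmat (n : ℕ) : Matrix (Fin n) (Fin n) ℝ :=
  fun i j =>
    if (i : ℕ) = (j : ℕ) then
      (((i : ℕ) + 1 : ℝ) * ((i : ℕ) + 1 - 1)) / 2 - ((i : ℕ) + 1 : ℝ) * n
    else if (j : ℕ) = (i : ℕ) + 1 then
      (((i : ℕ) + 1 : ℝ) * ((n : ℝ) - ((i : ℕ) + 1))) / 2
    else 0

lemma alt_real (m : ℕ) :
    ∑ d ∈ range (m + 1), ((-1 : ℝ)) ^ d * (m.choose d) = if m = 0 then 1 else 0 := by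
  have h := @Int.alternating_sum_range_choose m
  have h2 : ((∑ d ∈ range (m + 1), ((-1) ^ d * m.choose d : ℤ) : ℤ) : ℝ)
      = ∑ d ∈ range (m + 1), ((-1 : ℝ)) ^ d * (m.choose d) := by
    push_cast
    exact Finset.sum_congr rfl fun x _ => by ring
  rw [← h2, h]
  split_ifs <;> norm_num

lemma ortho (n a b : ℕ) (ha : a < n) (hb : b < n) :
    ∑ c ∈ range n, ((-1 : ℝ)) ^ (c + 1) * ((a + 1).choose (c + 1)) *
      (((-1 : ℝ)) ^ (b + 1) * ((c + 1).choose (b + 1))) = if a = b then 1 else 0 := by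
  set A := a + 1 with hA
  set B := b + 1 with hB
  have h0 : ((-1 : ℝ)) ^ (0:ℕ) * (A.choose 0) * (((-1 : ℝ)) ^ B * ((0:ℕ).choose B)) = 0 := by
    simp [B, Nat.choose_zero_succ]
  have hshift : ∑ c ∈ range n, ((-1 : ℝ)) ^ (c + 1) * (A.choose (c + 1)) *
        (((-1 : ℝ)) ^ B * ((c + 1).choose B))
      = ∑ m ∈ range (n + 1), ((-1 : ℝ)) ^ m * (A.choose m) * (((-1 : ℝ)) ^ B * (m.choose B)) := by
    rw [Finset.sum_range_succ' (fun m => ((-1 : ℝ)) ^ m * (A.choose m) * (((-1 : ℝ)) ^ B * (m.choose B))) n, h0, add_zero]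
  rw [hshift]
  have hsub : ∑ m ∈ range (n + 1), ((-1 : ℝ)) ^ m * (A.choose m) * (((-1 : ℝ)) ^ B * (m.choose B))
      = ∑ m ∈ range (A + 1), ((-1 : ℝ)) ^ m * (A.choose m) * (((-1 : ℝ)) ^ B * (m.choose B)) := by
    refine (Finset.sum_subset ?_ ?_).symm
    · intro x hx; simp only [mem_range] at *; omega
    · intro x _ hx; simp only [mem_range, not_lt] at hx
      rw [Nat.choose_eq_zero_of_lt (show A < x by omega)]; simp
  rw [hsub]
  by_cases hAB : B ≤ A
  · have h2 : ∑ m ∈ range (A + 1), ((-1 : ℝ)) ^ m * (A.choose m) * (((-1 : ℝ)) ^ B * (m.choose B))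
        = ∑ m ∈ Ico B (A + 1), ((-1 : ℝ)) ^ m * (A.choose m) * (((-1 : ℝ)) ^ B * (m.choose B)) := by
      refine (Finset.sum_subset ?_ ?_).symm
      · intro x hx; simp only [mem_Ico, mem_range] at *; omega
      · intro x hx1 hx2
        simp only [mem_range] at hx1
        simp only [mem_Ico, not_and, not_lt] at hx2
        have hxB : x < B := by
          by_contra h
          exact absurd (hx2 (by omega)) (by omega)
        rw [Nat.choose_eq_zero_of_lt (show x < B from hxB)]; simp
    rw [h2, Finset.sum_Ico_eq_sum_range]
    have h3 : ∀ d ∈ range (A + 1 - B), ((-1 : ℝ)) ^ (B + d) * (A.choose (B + d)) *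
          (((-1 : ℝ)) ^ B * ((B + d).choose B))
        = (A.choose B : ℝ) * (((-1 : ℝ)) ^ d * ((A - B).choose d)) := by
      intro d hd
      have hc : A.choose (B + d) * (B + d).choose B = A.choose B * (A - B).choose d := by
        have := Nat.choose_mul (n := A) (k := B + d) (s := B) (by omega)
        simpa [Nat.add_sub_cancel_left] using this
      have hcr : ((A.choose (B + d) * (B + d).choose B : ℕ) : ℝ) = ((A.choose B * (A - B).choose d : ℕ) : ℝ) := by
        exact Nat.cast_inj.mpr hc
      push_cast at hcr
      calc ((-1 : ℝ)) ^ (B + d) * (A.choose (B + d)) * (((-1 : ℝ)) ^ B * ((B + d).choose B))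
          = ((-1 : ℝ)) ^ (2 * B) * ((-1 : ℝ)) ^ d * ((A.choose (B + d) : ℝ) * ((B + d).choose B)) := by
            rw [pow_add, two_mul, pow_add]; ring
        _ = (A.choose B : ℝ) * (((-1 : ℝ)) ^ d * ((A - B).choose d)) := by
            rw [hcr]; rw [pow_mul]; norm_num; ring
    rw [Finset.sum_congr rfl h3, ← Finset.mul_sum]
    have hABs : A + 1 - B = (A - B) + 1 := by omega
    rw [hABs, alt_real (A - B)]
    by_cases hab : a = b
    · have h4 : A - B = 0 := by omega
      have h5 : A = B := by omega
      rw [h4, h5, Nat.choose_self]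
      simp [hab]
    · have h4 : A - B ≠ 0 := by omega
      simp [hab, h4]
  · have hz : ∀ m ∈ range (A + 1), ((-1 : ℝ)) ^ m * (A.choose m) * (((-1 : ℝ)) ^ B * (m.choose B)) = 0 := by
      intro m hm; simp only [mem_range] at hm
      rw [Nat.choose_eq_zero_of_lt (show m < B by omega)]; simp
    rw [Finset.sum_eq_zero hz]
    have : a ≠ b := by omega
    simp [this]

lemma TT (n : ℕ) : Tmat n * Tmat n = 1 := by
  ext a b
  rw [Matrix.mul_apply]
  have h : ∑ c : Fin n, Tmat n a c * Tmat n c b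
      = ∑ c ∈ range n, ((-1 : ℝ)) ^ (c + 1) * (((a:ℕ) + 1).choose (c + 1)) *
        (((-1 : ℝ)) ^ ((b:ℕ) + 1) * ((c + 1).choose ((b:ℕ) + 1))) := by
    rw [← Fin.sum_univ_eq_sum_range (fun c => ((-1 : ℝ)) ^ (c + 1) * (((a:ℕ) + 1).choose (c + 1)) *
        (((-1 : ℝ)) ^ ((b:ℕ) + 1) * ((c + 1).choose ((b:ℕ) + 1)))) n]
    apply Finset.sum_congr rfl
    intro c _
    simp [Tmat]
  rw [h, ortho n a b a.isLt b.isLt, Matrix.one_apply]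
  simp [Fin.ext_iff]

lemma key (N k j : ℕ) :
    ((k:ℝ)+1)*(((k:ℝ)+1)+N)/2 * (k.choose (j+1)) - ((k:ℝ)+1)^2 * ((k+1).choose (j+1))
      + ((k:ℝ)+1)*(((k:ℝ)+1)-N)/2 * ((k+2).choose (j+1))
    = ((k+1).choose (j+1) : ℝ) * (((j:ℝ)+1)*(j:ℝ)/2 - ((j:ℝ)+1)*N)
      - ((k+1).choose j : ℝ) * (j:ℝ) * ((N:ℝ)-(j:ℝ))/2 := by
  have E1 : ((k+1).choose (j+1) : ℝ) = k.choose j + k.choose (j+1) := by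
    exact_mod_cast congrArg (Nat.cast (R := ℝ)) (Nat.choose_succ_succ' k j)
  have E2 : ((k+2).choose (j+1) : ℝ) = (k+1).choose j + (k+1).choose (j+1) := by
    exact_mod_cast congrArg (Nat.cast (R := ℝ)) (Nat.choose_succ_succ' (k+1) j)
  have E3 : ((k:ℝ)+1) * (k.choose j) = ((k+1).choose (j+1) : ℝ) * ((j:ℝ)+1) := by
    exact_mod_cast congrArg (Nat.cast (R := ℝ)) (Nat.add_one_mul_choose_eq k j)
  have E4 : ((k+1).choose (j+1) : ℝ) * ((j:ℝ)+1) = ((k+1).choose j : ℝ) * (((k:ℝ)+1)-j) := by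
    rcases le_or_gt j (k+1) with h | h
    · have hc := Nat.choose_succ_right_eq (k+1) j
      have hs : (((k+1-j : ℕ)) : ℝ) = ((k:ℝ)+1)-j := by
        push_cast [h]; ring
      rw [← hs]
      exact_mod_cast congrArg (Nat.cast (R := ℝ)) hc
    · rw [Nat.choose_eq_zero_of_lt (show k+1 < j+1 by omega),
        Nat.choose_eq_zero_of_lt h]; simp
  rw [E2, E1] at *
  linear_combination (-(((k:ℝ)+1)+N)/2) * E3 + (-(((k:ℝ)+1)+(j:ℝ)-N)/2) * E4

lemma ATB (n : ℕ) : Amat n * Tmat n = Tmat n * Bmat n := by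
  ext k j
  rw [Matrix.mul_apply, Matrix.mul_apply]
  have hA : ∀ l : Fin n, Amat n k l * Tmat n l j =
      (if (l:ℕ) = (k:ℕ) then -(((k:ℕ)+1:ℝ)^2) * Tmat n l j else 0)
    + (if (l:ℕ)+1 = (k:ℕ) then (((k:ℕ)+1:ℝ)*(((k:ℕ)+1:ℝ)+n))/2 * Tmat n l j else 0)
    + (if (l:ℕ) = (k:ℕ)+1 then (((k:ℕ)+1:ℝ)*(((k:ℕ)+1:ℝ)-n))/2 * Tmat n l j else 0) := by
    intro l
    simp only [Amat]
    split_ifs with h1 h2 h3 <;> first | omega | (push_cast; try rw [show (l:ℕ) = (k:ℕ) by omega]) <;> ring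
  have hB : ∀ l : Fin n, Tmat n k l * Bmat n l j =
      (if (l:ℕ) = (j:ℕ) then
          Tmat n k l * ((((j:ℕ)+1:ℝ) * (((j:ℕ)+1:ℝ)-1))/2 - ((j:ℕ)+1:ℝ)*n) else 0)
    + (if (j:ℕ) = (l:ℕ)+1 then
          Tmat n k l * ((((j:ℕ):ℝ) * ((n:ℝ) - ((j:ℕ):ℝ)))/2) else 0) := by
    intro l
    simp only [Bmat]
    split_ifs with h1 h2 h3 h4 h5 h6 <;> first
      | omega
      | (simp only [h1]; push_cast; ring)
      | (simp only [h2]; push_cast; ring)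
      | (simp only [h3]; push_cast; ring)
      | (simp only [h4]; push_cast; ring)
      | (push_cast; ring)
  rw [Finset.sum_congr rfl (fun l _ => hA l), Finset.sum_congr rfl (fun l _ => hB l)]
  rw [Finset.sum_add_distrib, Finset.sum_add_distrib, Finset.sum_add_distrib]
  have hS1 : ∑ l : Fin n, (if (l:ℕ) = (k:ℕ) then -(((k:ℕ)+1:ℝ)^2) * Tmat n l j else 0)
      = -(((k:ℕ)+1:ℝ)^2) * ((-1:ℝ)^((j:ℕ)+1) * (((k:ℕ)+1).choose ((j:ℕ)+1))) := by
    simp only [Fin.val_inj]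
    rw [Finset.sum_ite_eq' univ k (fun l => -(((k:ℕ)+1:ℝ)^2) * Tmat n l j)]
    simp [Tmat]
  have hS2 : ∑ l : Fin n, (if (l:ℕ)+1 = (k:ℕ) then
        (((k:ℕ)+1:ℝ)*(((k:ℕ)+1:ℝ)+n))/2 * Tmat n l j else 0)
      = (((k:ℕ)+1:ℝ)*(((k:ℕ)+1:ℝ)+n))/2 * ((-1:ℝ)^((j:ℕ)+1) * ((k:ℕ).choose ((j:ℕ)+1))) := by
    by_cases hk : (k:ℕ) = 0
    · rw [Finset.sum_eq_zero (fun l _ => if_neg (by omega))]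
      rw [hk]; simp
    · have hk1 : (k:ℕ) - 1 < n := by omega
      set k' : Fin n := ⟨(k:ℕ)-1, hk1⟩ with hk'
      have hcond : ∀ l : Fin n, ((l:ℕ)+1 = (k:ℕ)) = (l = k') := by
        intro l
        have hv : (k' : ℕ) = (k:ℕ) - 1 := rfl
        apply propext
        rw [Fin.ext_iff, hv]
        omega
      simp only [hcond]
      rw [Finset.sum_ite_eq' univ k' (fun l => (((k:ℕ)+1:ℝ)*(((k:ℕ)+1:ℝ)+n))/2 * Tmat n l j)]
      have hv1 : (k' : ℕ) + 1 = (k:ℕ) := by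
        have hv : (k' : ℕ) = (k:ℕ) - 1 := rfl
        omega
      simp only [mem_univ, if_true, Tmat, hv1]
  have hS3 : ∑ l : Fin n, (if (l:ℕ) = (k:ℕ)+1 then
        (((k:ℕ)+1:ℝ)*(((k:ℕ)+1:ℝ)-n))/2 * Tmat n l j else 0)
      = (((k:ℕ)+1:ℝ)*(((k:ℕ)+1:ℝ)-n))/2 * ((-1:ℝ)^((j:ℕ)+1) * (((k:ℕ)+2).choose ((j:ℕ)+1))) := by
    by_cases hk2 : (k:ℕ)+1 < n
    · set k'' : Fin n := ⟨(k:ℕ)+1, hk2⟩ with hk''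
      have hcond : ∀ l : Fin n, ((l:ℕ) = (k:ℕ)+1) = (l = k'') := by
        intro l
        have hv : (k'' : ℕ) = (k:ℕ) + 1 := rfl
        apply propext
        rw [Fin.ext_iff, hv]
      simp only [hcond]
      rw [Finset.sum_ite_eq' univ k'' (fun l => (((k:ℕ)+1:ℝ)*(((k:ℕ)+1:ℝ)-n))/2 * Tmat n l j)]
      have hv1 : (k'' : ℕ) + 1 = (k:ℕ) + 2 := rfl
      simp only [mem_univ, if_true, Tmat, hv1]
    · have hkn : (k:ℕ)+1 = n := by
        have := k.isLt
        omega
      rw [Finset.sum_eq_zero (fun l _ => if_neg (by have := l.isLt; omega))]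
      have : ((k:ℕ):ℝ)+1 = (n:ℝ) := by exact_mod_cast hkn
      rw [show (((k:ℕ)+1:ℝ)-(n:ℝ)) = 0 by rw [← this]; ring]
      simp
  have hR1 : ∑ l : Fin n, (if (l:ℕ) = (j:ℕ) then
        Tmat n k l * ((((j:ℕ)+1:ℝ) * (((j:ℕ)+1:ℝ)-1))/2 - ((j:ℕ)+1:ℝ)*n) else 0)
      = ((-1:ℝ)^((j:ℕ)+1) * (((k:ℕ)+1).choose ((j:ℕ)+1)))
        * ((((j:ℕ)+1:ℝ) * (((j:ℕ)+1:ℝ)-1))/2 - ((j:ℕ)+1:ℝ)*n) := by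
    simp only [Fin.val_inj]
    rw [Finset.sum_ite_eq' univ j
      (fun l => Tmat n k l * ((((j:ℕ)+1:ℝ) * (((j:ℕ)+1:ℝ)-1))/2 - ((j:ℕ)+1:ℝ)*n))]
    simp [Tmat]
  have hR2 : ∑ l : Fin n, (if (j:ℕ) = (l:ℕ)+1 then
        Tmat n k l * ((((j:ℕ):ℝ) * ((n:ℝ) - ((j:ℕ):ℝ)))/2) else 0)
      = ((-1:ℝ)^((j:ℕ)) * (((k:ℕ)+1).choose ((j:ℕ))))
        * ((((j:ℕ):ℝ) * ((n:ℝ) - ((j:ℕ):ℝ)))/2) := by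
    by_cases hj : (j:ℕ) = 0
    · rw [Finset.sum_eq_zero (fun l _ => if_neg (by omega))]
      rw [hj]; simp
    · have hj1 : (j:ℕ) - 1 < n := by have := j.isLt; omega
      set j' : Fin n := ⟨(j:ℕ)-1, hj1⟩ with hj'
      have hcond : ∀ l : Fin n, ((j:ℕ) = (l:ℕ)+1) = (l = j') := by
        intro l
        have hv : (j' : ℕ) = (j:ℕ) - 1 := rfl
        apply propext
        rw [Fin.ext_iff, hv]
        omega
      simp only [hcond]
      rw [Finset.sum_ite_eq' univ j'
        (fun l => Tmat n k l * ((((j:ℕ):ℝ) * ((n:ℝ) - ((j:ℕ):ℝ)))/2))]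
      have hv1 : (j' : ℕ) + 1 = (j:ℕ) := by
        have hv : (j' : ℕ) = (j:ℕ) - 1 := rfl
        omega
      simp only [mem_univ, if_true, Tmat, hv1]
  rw [hS1, hS2, hS3, hR1, hR2]
  linear_combination ((-1:ℝ)^((j:ℕ)+1)) * key n (k:ℕ) (j:ℕ)

theorem stmt7 (n : ℕ) (hn : 0 < n) (i j : Fin n) :
    (Tmat n * Amat n * Tmat n) i j =
      if (i : ℕ) = (j : ℕ) then
        (((i : ℕ) + 1 : ℝ) * ((i : ℕ) + 1 - 1)) / 2 - ((i : ℕ) + 1 : ℝ) * n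
      else if (j : ℕ) = (i : ℕ) + 1 then
        (((i : ℕ) + 1 : ℝ) * ((n : ℝ) - ((i : ℕ) + 1))) / 2
      else 0 := by
  have h : Tmat n * Amat n * Tmat n = Bmat n := by
    calc Tmat n * Amat n * Tmat n = Tmat n * (Amat n * Tmat n) := by rw [Matrix.mul_assoc]
      _ = Tmat n * (Tmat n * Bmat n) := by rw [ATB]
      _ = (Tmat n * Tmat n) * Bmat n := by rw [Matrix.mul_assoc]
      _ = Bmat n := by rw [TT, Matrix.one_mul]
  rw [h]
  simp only [Bmat]
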